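/- Let M be a complete doubling metric space and {φ_i : i ∈ I} a semiconformal iterated function system on M such that the controlled Moran construction {φ_i(E) : i ∈ I*} has the finite clustering property. Then there exist a constant δ > 0 and a point x ∈ E such that B(φ_i(x), δ·diam(φ_i(E))) ∩ B(φ_j(x), δ·diam(φ_j(E))) = ∅ whenever i, j ∈ I* are incomparable. -/

import Mathlib

open Metric Set Filter MeasureTheory Topology
open scoped ENNReal ENat

namespace Moran

/-- Composition of the maps of an IFS along a finite word:
`comp φ (i₁, …, iₙ) = φ i₁ ∘ ⋯ ∘ φ iₙ`. -/
def comp {ι M : Type*} (φ : ι → M → M) : List ι → M → M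
  | [] => id
  | a :: l => φ a ∘ comp φ l

/-- The initial segment (of length `n`) of an infinite word. -/
def pre {ι : Type*} (j : ℕ → ι) (n : ℕ) : List ι := List.ofFn fun k : Fin n => j k

/-- The cylinder set of a finite word, as a subset of the symbol space `I^∞`. -/
def cylinder {ι : Type*} (i : List ι) : Set (ℕ → ι) := {j | pre j i.length = i}

/-- Two finite words are incomparable if neither is an initial segment of the other. -/
def Incomp {ι : Type*} (i j : List ι) : Prop := ¬ i <+: j ∧ ¬ j <+: i

/-- A metric space is doubling if there is `κ` such that every ball of radius `2r`
can be covered by `κ` balls of radius `r`. -/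
def DoublingSpace (M : Type*) [MetricSpace M] : Prop :=
  ∃ κ : ℕ, ∀ (x : M) (r : ℝ), ∃ s : Finset M,
    s.card ≤ κ ∧ ball x (2 * r) ⊆ ⋃ y ∈ s, ball y r

/-- A weakly controlled Moran construction (WCMC) over the index set `ι`
in the metric space `M`. The sets are indexed by nonempty finite words,
modelled as nonempty lists; `i.dropLast` plays the role of `i⁻`. -/
structure WCMC (ι M : Type*) [Fintype ι] [MetricSpace M] where
  X : List ι → Set M
  compact : ∀ i : List ι, i ≠ [] → IsCompact (X i)
  diam_pos : ∀ i : List ι, i ≠ [] → 0 < diam (X i)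
  D : ℝ
  one_le_D : 1 ≤ D
  nested : ∀ i : List ι, 2 ≤ i.length → X i ⊆ X i.dropLast
  small : ∃ n : ℕ, 1 ≤ n ∧ ∀ i : List ι, i.length = n → diam (X i) < D⁻¹
  submult : ∀ i j : List ι, i ≠ [] → j ≠ [] →
    diam (X (i ++ j)) ≤ D * diam (X i) * diam (X j)
  lower : ∀ i : List ι, 2 ≤ i.length → D⁻¹ * diam (X i.dropLast) ≤ diam (X i)

/-- A controlled Moran construction (CMC). -/
structure CMC (ι M : Type*) [Fintype ι] [MetricSpace M] where
  X : List ι → Set M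
  compact : ∀ i : List ι, i ≠ [] → IsCompact (X i)
  diam_pos : ∀ i : List ι, i ≠ [] → 0 < diam (X i)
  D : ℝ
  one_le_D : 1 ≤ D
  nested : ∀ i : List ι, 2 ≤ i.length → X i ⊆ X i.dropLast
  small : ∃ n : ℕ, 1 ≤ n ∧ ∀ i : List ι, i.length = n → diam (X i) < D⁻¹
  controlled_le : ∀ i j : List ι, i ≠ [] → j ≠ [] →
    diam (X (i ++ j)) ≤ D * (diam (X i) * diam (X j))
  controlled_ge : ∀ i j : List ι, i ≠ [] → j ≠ [] →
    D⁻¹ * (diam (X i) * diam (X j)) ≤ diam (X (i ++ j))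

/-- The limit set `E = π(I^∞)` of a Moran construction. -/
def limitSet {ι M : Type*} [MetricSpace M] (X : List ι → Set M) : Set M :=
  {x | ∃ j : ℕ → ι, ∀ n : ℕ, 1 ≤ n → x ∈ X (pre j n)}

/-- `Z(r)`: the words whose construction piece has diameter at most `r` while the
parent piece has diameter greater than `r` (first-generation words with diameter
at most `r` are included). -/
def Zr {ι M : Type*} [MetricSpace M] (X : List ι → Set M) (r : ℝ) : Set (List ι) :=
  {i | i ≠ [] ∧ diam (X i) ≤ r ∧ (i.length = 1 ∨ r < diam (X i.dropLast))}

/-- `Z(x,r)`: the words of `Z(r)` whose construction piece meets `B(x,r)`. -/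
def Zx {ι M : Type*} [MetricSpace M] (X : List ι → Set M) (x : M) (r : ℝ) :
    Set (List ι) :=
  {i | i ∈ Zr X r ∧ (X i ∩ ball x r).Nonempty}

/-- The finite clustering property: `sup_{x ∈ E} limsup_{r ↓ 0} #Z(x,r) < ∞`. -/
def FCP {ι M : Type*} [MetricSpace M] (X : List ι → Set M) : Prop :=
  ∃ K : ℕ, ∀ x ∈ limitSet X,
    Filter.limsup (fun r : ℝ => (Zx X x r).encard) (𝓝[>] 0) ≤ (K : ℕ∞)

/-- The ball condition. -/
def BallCond {ι M : Type*} [MetricSpace M] (X : List ι → Set M) : Prop :=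
  ∃ δ : ℝ, 0 < δ ∧ δ < 1 ∧ ∀ x ∈ limitSet X, ∃ rx > 0, ∀ r : ℝ, 0 < r → r < rx →
    ∃ c : List ι → M, (∀ i ∈ Zx X x r, infDist (c i) (X i) < r) ∧
      (Zx X x r).Pairwise fun i j => Disjoint (ball (c i) (δ * r)) (ball (c j) (δ * r))

/-- Distance between two subsets of a metric space. -/
noncomputable def setDist {M : Type*} [MetricSpace M] (s t : Set M) : ℝ :=
  ENNReal.toReal (⨅ x ∈ s, EMetric.infEdist x t)

/-- Tractability of a Moran construction. -/
def Tractable {ι M : Type*} [MetricSpace M] (X : List ι → Set M) : Prop :=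
  ∃ C : ℝ, 1 ≤ C ∧ ∀ r : ℝ, 0 < r → ∀ h i j : List ι, h ≠ [] →
    i ∈ Zr X r → j ∈ Zr X r → setDist (X i) (X j) ≤ r →
      setDist (X (h ++ i)) (X (h ++ j)) ≤ C * diam (X h) * r

/-- The `n`-th pressure sum `Σ_{i ∈ I^n} diam(X_i)^t`. -/
noncomputable def presSum {ι M : Type*} [Fintype ι] [MetricSpace M]
    (X : List ι → Set M) (t : ℝ) (n : ℕ) : ℝ :=
  ∑ i : Fin n → ι, diam (X (List.ofFn i)) ^ t

/-- `P` is the topological pressure of the construction `X`: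
`P(t) = lim_{n → ∞} (1/n) log Σ_{i ∈ I^n} diam(X_i)^t` for every `t ≥ 0`. -/
def IsPressure {ι M : Type*} [Fintype ι] [MetricSpace M]
    (X : List ι → Set M) (P : ℝ → ℝ) : Prop :=
  ∀ t : ℝ, 0 ≤ t →
    Tendsto (fun n : ℕ => (1 / (n : ℝ)) * Real.log (presSum X t n)) atTop (𝓝 (P t))

/-- The covering number `N(E,r)`: the minimal number of open balls of radius `r`
needed to cover `E`. -/
noncomputable def coverNum {M : Type*} [MetricSpace M] (E : Set M) (r : ℝ) : ℕ :=
  sInf {k : ℕ | ∃ s : Finset M, s.card = k ∧ E ⊆ ⋃ y ∈ s, ball y r}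

/-- The upper Minkowski dimension `limsup_{r ↓ 0} log N(E,r) / (−log r)`. -/
noncomputable def upMink {M : Type*} [MetricSpace M] (E : Set M) : EReal :=
  Filter.limsup
    (fun r : ℝ => ((Real.log (coverNum E r) / (-Real.log r) : ℝ) : EReal)) (𝓝[>] 0)

/-- The `n`-th stage `M^ψ_n(A)` of the Carathéodory construction on the symbol
space: the infimum of `Σ_{i ∈ C} ψ(i)` over covers of `A` by cylinders of words of
length at least `n`. -/
noncomputable def Mpsin {ι : Type*} (ψ : List ι → ℝ) (n : ℕ) (A : Set (ℕ → ι)) :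
    ℝ≥0∞ :=
  ⨅ (C : Set (List ι)) (_ : ∀ i ∈ C, i ≠ [] ∧ n ≤ i.length)
    (_ : A ⊆ ⋃ i ∈ C, cylinder i), ∑' i : C, ENNReal.ofReal (ψ i)

/-- `M^ψ(A) = lim_{n → ∞} M^ψ_n(A)`; since the stages are nondecreasing in `n`,
the limit equals the supremum. -/
noncomputable def Mpsi {ι : Type*} (ψ : List ι → ℝ) (A : Set (ℕ → ι)) : ℝ≥0∞ :=
  ⨆ n : ℕ, Mpsin ψ n A

/-- A semiconformal iterated function system on `M`: finitely many contractive
injections `φ i` whose invariant set `E` has positive diameter, together with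
semiconformality bounds `s̲_i, s̄_i` (comparable via `D`) for the iterated maps. -/
structure SCIFS (ι M : Type*) [Fintype ι] [MetricSpace M] where
  φ : ι → M → M
  contr : ∀ i : ι, ∃ s : ℝ, 0 ≤ s ∧ s < 1 ∧ ∀ x y : M, dist (φ i x) (φ i y) ≤ s * dist x y
  inj : ∀ i : ι, Function.Injective (φ i)
  E : Set M
  E_compact : IsCompact E
  E_nonempty : E.Nonempty
  E_invariant : E = ⋃ i : ι, φ i '' E
  diamE_pos : 0 < diam E
  slo : List ι → ℝ
  shi : List ι → ℝ
  D : ℝ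
  one_le_D : 1 ≤ D
  slo_pos : ∀ i : List ι, i ≠ [] → 0 < slo i
  slo_le_shi : ∀ i : List ι, i ≠ [] → slo i ≤ shi i
  shi_lt_one : ∀ i : List ι, i ≠ [] → shi i < 1
  shi_le_D_slo : ∀ i : List ι, i ≠ [] → shi i ≤ D * slo i
  lower : ∀ i : List ι, i ≠ [] → ∀ x y : M,
    slo i * dist x y ≤ dist (comp φ i x) (comp φ i y)
  upper : ∀ i : List ι, i ≠ [] → ∀ x y : M,
    dist (comp φ i x) (comp φ i y) ≤ shi i * dist x y

/-- The Moran construction pieces `E_i = φ_i(E)` associated with an IFS. -/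
def SCIFS.Xs {ι M : Type*} [Fintype ι] [MetricSpace M] (S : SCIFS ι M) :
    List ι → Set M := fun i => comp S.φ i '' S.E

/-- The open set condition. -/
def OSC {ι M : Type*} [Fintype ι] [MetricSpace M] (S : SCIFS ι M) : Prop :=
  ∃ U : Set M, IsOpen U ∧ U.Nonempty ∧ ∀ i j : List ι, i ≠ [] → j ≠ [] →
    Incomp i j → Disjoint (comp S.φ i '' U) (comp S.φ j '' U)

/-- The strong open set condition. -/
def SOSC {ι M : Type*} [Fintype ι] [MetricSpace M] (S : SCIFS ι M) : Prop :=
  ∃ U : Set M, IsOpen U ∧ U.Nonempty ∧ (U ∩ S.E).Nonempty ∧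
    ∀ i j : List ι, i ≠ [] → j ≠ [] →
      Incomp i j → Disjoint (comp S.φ i '' U) (comp S.φ j '' U)

/-- An essential open set for an IFS: a dense open set meeting the invariant set. -/
def EssentialOpen {ι M : Type*} [Fintype ι] [MetricSpace M] (S : SCIFS ι M)
    (W : Set M) : Prop :=
  IsOpen W ∧ Dense W ∧ (W ∩ S.E).Nonempty

/-- A properly semiconformal IFS. -/
def ProperlySC {ι M : Type*} [Fintype ι] [MetricSpace M] (S : SCIFS ι M) : Prop :=
  ∃ W : Set M, EssentialOpen S W ∧ W ≠ univ ∧ ∀ x ∈ W, ∃ lam : ℝ, 1 ≤ lam ∧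
    ∀ i : List ι, i ≠ [] →
      infDist (comp S.φ i x) (comp S.φ i '' Wᶜ) ≤
        lam * infDist (comp S.φ i x) ((comp S.φ i '' W)ᶜ)

end Moran

namespace Moran

variable {ι M : Type*}

section Lists

theorem comp_cons (φ : ι → M → M) (a : ι) (l : List ι) :
    comp φ (a :: l) = φ a ∘ comp φ l := rfl

theorem comp_append (φ : ι → M → M) : ∀ u v : List ι,
    comp φ (u ++ v) = comp φ u ∘ comp φ v
  | [], v => rfl
  | a :: u, v => by
    rw [List.cons_append, comp_cons, comp_cons, comp_append φ u v]
    rfl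

theorem pre_length (τ : ℕ → ι) (n : ℕ) : (pre τ n).length = n := by
  simp [pre]

theorem pre_succ (τ : ℕ → ι) (n : ℕ) : pre τ (n + 1) = pre τ n ++ [τ n] := by
  rw [pre, List.ofFn_succ']
  simp [pre, List.concat_eq_append]

theorem pre_dropLast (τ : ℕ → ι) (n : ℕ) : (pre τ (n + 1)).dropLast = pre τ n := by
  rw [pre_succ, List.dropLast_concat]

theorem pre_ne_nil (τ : ℕ → ι) {n : ℕ} (hn : 1 ≤ n) : pre τ n ≠ [] := by
  intro h
  have := pre_length τ n
  rw [h] at this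
  simp at this
  omega

theorem pre_prefix (τ : ℕ → ι) {n m : ℕ} (h : n ≤ m) : pre τ n <+: pre τ m := by
  induction m with
  | zero => simp_all
  | succ m ih =>
    rcases Nat.lt_or_ge n (m+1) with h' | h'
    · exact (ih (by omega)).trans (by rw [pre_succ]; exact List.prefix_append _ _)
    · have : n = m + 1 := by omega
      subst this; exact List.prefix_refl _

theorem prefix_pre {τ : ℕ → ι} {u : List ι} {m : ℕ} (h : u <+: pre τ m) :
    pre τ u.length = u := by
  have h1 : pre τ u.length <+: pre τ m := pre_prefix τ (by
    have := h.length_le; rwa [pre_length] at this)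
  have h2 : pre τ u.length <+: u :=
    List.prefix_of_prefix_length_le h1 h (by rw [pre_length])
  exact h2.eq_of_length (by rw [pre_length])

/-- infinite word obtained by prepending a finite word -/
def wcat (u : List ι) (τ : ℕ → ι) : ℕ → ι := fun k =>
  if h : k < u.length then u.get ⟨k, h⟩ else τ (k - u.length)

theorem wcat_nil (τ : ℕ → ι) : wcat [] τ = τ := by
  funext k; simp [wcat]

theorem pre_wcat_of_le {u : List ι} {n : ℕ} (τ : ℕ → ι) (h : n ≤ u.length) :
    pre (wcat u τ) n = u.take n := by
  apply List.ext_getElem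
  · rw [pre_length, List.length_take]; omega
  · intro k h1 h2
    rw [pre_length] at h1
    simp only [pre]; rw [List.getElem_ofFn, List.getElem_take]
    have hk : k < u.length := by omega
    simp [wcat, hk]

theorem pre_wcat_add (u : List ι) (τ : ℕ → ι) (t : ℕ) :
    pre (wcat u τ) (u.length + t) = u ++ pre τ t := by
  apply List.ext_getElem
  · rw [pre_length, List.length_append, pre_length]
  · intro k h1 h2
    rw [pre_length] at h1
    simp only [pre]; rw [List.getElem_ofFn]
    rcases Nat.lt_or_ge k u.length with hk | hk
    · rw [List.getElem_append_left hk]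
      simp [wcat, hk]
    · rw [List.getElem_append_right hk]
      simp only [wcat, dif_neg (Nat.not_lt.2 hk)]
      rw [List.getElem_ofFn]

theorem prefix_append_prefix {u x y : List ι} (h : x <+: y) : u ++ x <+: u ++ y := by
  obtain ⟨t, ht⟩ := h
  exact ⟨t, by rw [List.append_assoc, ht]⟩

theorem Incomp.symm {i j : List ι} (h : Incomp i j) : Incomp j i := ⟨h.2, h.1⟩

theorem incomp_of_prefix {g x y : List ι} {a b : ι}
    (ha : g ++ [a] <+: x) (hb : g ++ [b] <+: y) (hab : a ≠ b) : Incomp x y := by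
  constructor
  · intro hxy
    have h1 : g ++ [a] <+: y := ha.trans hxy
    have h2 : g ++ [a] <+: g ++ [b] :=
      List.prefix_of_prefix_length_le h1 hb (by simp)
    have := h2.eq_of_length (by simp)
    exact hab (by simpa using List.append_cancel_left this)
  · intro hyx
    have h1 : g ++ [b] <+: x := hb.trans hyx
    have h2 : g ++ [b] <+: g ++ [a] :=
      List.prefix_of_prefix_length_le h1 ha (by simp)
    have := h2.eq_of_length (by simp)
    exact hab (by simpa using (List.append_cancel_left this).symm)

theorem Incomp.ne {i j : List ι} (h : Incomp i j) : i ≠ j := by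
  intro he; exact h.1 (he ▸ List.prefix_refl i)

theorem incomp_decomp : ∀ {i j : List ι}, Incomp i j →
    ∃ (k : List ι) (a b : ι) (i' j' : List ι), a ≠ b ∧ i = k ++ a :: i' ∧ j = k ++ b :: j'
  | [], j, h => absurd (List.nil_prefix (l := j)) h.1
  | _ :: _, [], h => absurd (List.nil_prefix) h.2
  | a :: i₀, b :: j₀, h => by
    by_cases hab : a = b
    · subst hab
      have h0 : Incomp i₀ j₀ := by
        constructor
        · intro hp; exact h.1 (List.cons_prefix_cons.2 ⟨rfl, hp⟩)
        · intro hp; exact h.2 (List.cons_prefix_cons.2 ⟨rfl, hp⟩)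
      obtain ⟨k, c, d, i', j', hcd, hi, hj⟩ := incomp_decomp h0
      exact ⟨a :: k, c, d, i', j', hcd, by simp [hi], by simp [hj]⟩
    · exact ⟨[], a, b, i₀, j₀, hab, rfl, rfl⟩

end Lists

end Moran
namespace Moran

variable {ι M : Type*} [Fintype ι] [MetricSpace M]

noncomputable def SCIFS.slo' (S : SCIFS ι M) : List ι → ℝ
  | [] => 1
  | (a :: l) => S.slo (a :: l)

noncomputable def SCIFS.shi' (S : SCIFS ι M) : List ι → ℝ
  | [] => 1
  | (a :: l) => S.shi (a :: l)

variable (S : SCIFS ι M)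

@[simp] theorem SCIFS.slo'_nil : S.slo' [] = 1 := rfl
@[simp] theorem SCIFS.shi'_nil : S.shi' [] = 1 := rfl
theorem SCIFS.slo'_ne (u : List ι) (h : u ≠ []) : S.slo' u = S.slo u := by
  cases u with
  | nil => exact absurd rfl h
  | cons a l => rfl
theorem SCIFS.shi'_ne (u : List ι) (h : u ≠ []) : S.shi' u = S.shi u := by
  cases u with
  | nil => exact absurd rfl h
  | cons a l => rfl

theorem SCIFS.slo'_pos (u : List ι) : 0 < S.slo' u := by
  by_cases h : u = []
  · subst h; simp
  · rw [S.slo'_ne u h]; exact S.slo_pos u h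

theorem SCIFS.slo'_le_shi' (u : List ι) : S.slo' u ≤ S.shi' u := by
  by_cases h : u = []
  · subst h; simp
  · rw [S.slo'_ne u h, S.shi'_ne u h]; exact S.slo_le_shi u h

theorem SCIFS.shi'_pos (u : List ι) : 0 < S.shi' u :=
  lt_of_lt_of_le (S.slo'_pos u) (S.slo'_le_shi' u)

theorem SCIFS.shi'_le_D_slo' (u : List ι) : S.shi' u ≤ S.D * S.slo' u := by
  by_cases h : u = []
  · subst h; simpa using S.one_le_D
  · rw [S.slo'_ne u h, S.shi'_ne u h]; exact S.shi_le_D_slo u h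

theorem SCIFS.D_pos : 0 < S.D := lt_of_lt_of_le one_pos S.one_le_D

theorem SCIFS.dist_comp_le (u : List ι) (x y : M) :
    dist (comp S.φ u x) (comp S.φ u y) ≤ S.shi' u * dist x y := by
  by_cases h : u = []
  · subst h; simp [comp]
  · rw [S.shi'_ne u h]; exact S.upper u h x y

theorem SCIFS.dist_comp_ge (u : List ι) (x y : M) :
    S.slo' u * dist x y ≤ dist (comp S.φ u x) (comp S.φ u y) := by
  by_cases h : u = []
  · subst h; simp [comp]
  · rw [S.slo'_ne u h]; exact S.lower u h x y

theorem SCIFS.continuous_comp (u : List ι) : Continuous (comp S.φ u) := by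
  induction u with
  | nil => exact continuous_id
  | cons a u ih =>
    rw [comp_cons]
    refine Continuous.comp ?_ ih
    obtain ⟨s, hs0, _, hs⟩ := S.contr a
    exact (LipschitzWith.of_dist_le_mul (K := Real.toNNReal s)
      (fun x y => by rw [Real.coe_toNNReal s hs0]; exact hs x y)).continuous

theorem SCIFS.comp_mem_E {x : M} (hx : x ∈ S.E) (u : List ι) : comp S.φ u x ∈ S.E := by
  induction u with
  | nil => exact hx
  | cons a u ih =>
    rw [comp_cons]
    have : S.φ a (comp S.φ u x) ∈ S.φ a '' S.E := ⟨_, ih, rfl⟩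
    rw [S.E_invariant]
    exact Set.mem_iUnion.2 ⟨a, this⟩

theorem SCIFS.Xs_nil : S.Xs [] = S.E := by
  simp [SCIFS.Xs, comp]

theorem SCIFS.Xs_subset_E (u : List ι) : S.Xs u ⊆ S.E := by
  rintro _ ⟨x, hx, rfl⟩
  exact S.comp_mem_E hx u

theorem SCIFS.Xs_append (u v : List ι) : S.Xs (u ++ v) = comp S.φ u '' S.Xs v := by
  rw [SCIFS.Xs, SCIFS.Xs, comp_append, Set.image_comp]

theorem SCIFS.Xs_nonempty (u : List ι) : (S.Xs u).Nonempty :=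
  S.E_nonempty.image _

theorem SCIFS.isCompact_Xs (u : List ι) : IsCompact (S.Xs u) :=
  S.E_compact.image (S.continuous_comp u)

theorem SCIFS.bounded_E : Bornology.IsBounded S.E := S.E_compact.isBounded

theorem SCIFS.bounded_Xs (u : List ι) : Bornology.IsBounded (S.Xs u) :=
  S.bounded_E.subset (S.Xs_subset_E u)

theorem SCIFS.Xs_prefix_mono {u v : List ι} (h : u <+: v) : S.Xs v ⊆ S.Xs u := by
  obtain ⟨t, rfl⟩ := h
  rw [SCIFS.Xs_append]
  exact Set.image_mono (S.Xs_subset_E t)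

theorem SCIFS.diam_Xs_le_diam_E (u : List ι) : Metric.diam (S.Xs u) ≤ Metric.diam S.E :=
  Metric.diam_mono (S.Xs_subset_E u) S.bounded_E

theorem SCIFS.diam_Xs_prefix_anti {u v : List ι} (h : u <+: v) :
    Metric.diam (S.Xs v) ≤ Metric.diam (S.Xs u) :=
  Metric.diam_mono (S.Xs_prefix_mono h) (S.bounded_Xs u)

theorem SCIFS.diam_Xs_append_le (u v : List ι) :
    Metric.diam (S.Xs (u ++ v)) ≤ S.shi' u * Metric.diam (S.Xs v) := by
  rw [SCIFS.Xs_append]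
  apply Metric.diam_le_of_forall_dist_le
    (mul_nonneg (S.shi'_pos u).le Metric.diam_nonneg)
  rintro _ ⟨p, hp, rfl⟩ _ ⟨q, hq, rfl⟩
  calc dist (comp S.φ u p) (comp S.φ u q) ≤ S.shi' u * dist p q := S.dist_comp_le u p q
  _ ≤ S.shi' u * Metric.diam (S.Xs v) := by
      exact mul_le_mul_of_nonneg_left
        (Metric.dist_le_diam_of_mem (S.bounded_Xs v) hp hq) (S.shi'_pos u).le

theorem SCIFS.diam_Xs_append_ge (u v : List ι) :
    S.slo' u * Metric.diam (S.Xs v) ≤ Metric.diam (S.Xs (u ++ v)) := by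
  rw [mul_comm, ← le_div_iff₀ (S.slo'_pos u)]
  apply Metric.diam_le_of_forall_dist_le
    (div_nonneg Metric.diam_nonneg (S.slo'_pos u).le)
  intro p hp q hq
  rw [le_div_iff₀ (S.slo'_pos u), mul_comm]
  calc S.slo' u * dist p q ≤ dist (comp S.φ u p) (comp S.φ u q) := S.dist_comp_ge u p q
  _ ≤ Metric.diam (S.Xs (u ++ v)) := by
      apply Metric.dist_le_diam_of_mem (S.bounded_Xs _)
      · rw [SCIFS.Xs_append]; exact ⟨p, hp, rfl⟩
      · rw [SCIFS.Xs_append]; exact ⟨q, hq, rfl⟩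

theorem SCIFS.diam_E_pos : 0 < Metric.diam S.E := S.diamE_pos

theorem SCIFS.slo'_diam_le (u : List ι) :
    S.slo' u * Metric.diam S.E ≤ Metric.diam (S.Xs u) := by
  have := S.diam_Xs_append_ge u []
  rwa [SCIFS.Xs_nil, List.append_nil] at this

theorem SCIFS.diam_le_shi' (u : List ι) :
    Metric.diam (S.Xs u) ≤ S.shi' u * Metric.diam S.E := by
  have := S.diam_Xs_append_le u []
  rwa [SCIFS.Xs_nil, List.append_nil] at this

theorem SCIFS.diam_Xs_pos (u : List ι) : 0 < Metric.diam (S.Xs u) :=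
  lt_of_lt_of_le (mul_pos (S.slo'_pos u) S.diam_E_pos) (S.slo'_diam_le u)

theorem SCIFS.diam_Xs_le_pow {σ : ℝ} (hσ : ∀ a : ι, S.shi [a] ≤ σ) (hσ0 : 0 ≤ σ) :
    ∀ u : List ι, Metric.diam (S.Xs u) ≤ σ ^ u.length * Metric.diam S.E := by
  intro u
  induction u with
  | nil => rw [SCIFS.Xs_nil]; simp
  | cons a u ih =>
    have h1 : Metric.diam (S.Xs (a :: u)) ≤ S.shi' [a] * Metric.diam (S.Xs u) := by
      have := S.diam_Xs_append_le [a] u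
      simpa using this
    have h2 : S.shi' [a] = S.shi [a] := rfl
    calc Metric.diam (S.Xs (a :: u)) ≤ S.shi [a] * Metric.diam (S.Xs u) := by
          rw [← h2]; exact h1
    _ ≤ σ * (σ ^ u.length * Metric.diam S.E) := by
        apply mul_le_mul (hσ a) ih Metric.diam_nonneg hσ0
    _ = σ ^ (a :: u).length * Metric.diam S.E := by
        rw [List.length_cons, pow_succ]; ring

end Moran
namespace Moran

variable {ι M : Type*} [Fintype ι] [MetricSpace M] (S : SCIFS ι M)

/-- `z` lies in all the cylinders of the infinite word `τ`. -/
def HasAddr (z : M) (τ : ℕ → ι) : Prop := ∀ n : ℕ, 1 ≤ n → z ∈ S.Xs (pre τ n)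

variable {S}

theorem HasAddr.mem_E {z : M} {τ : ℕ → ι} (h : HasAddr S z τ) : z ∈ S.E :=
  S.Xs_subset_E _ (h 1 le_rfl)

theorem HasAddr.mem_limitSet {z : M} {τ : ℕ → ι} (h : HasAddr S z τ) :
    z ∈ limitSet S.Xs := ⟨τ, h⟩

theorem HasAddr.comp {z : M} {τ : ℕ → ι} (h : HasAddr S z τ) (u : List ι) :
    HasAddr S (comp S.φ u z) (wcat u τ) := by
  intro n hn
  rcases le_or_gt n u.length with hnu | hnu
  · rw [pre_wcat_of_le τ hnu]
    apply S.Xs_prefix_mono (List.take_prefix n u)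
    exact ⟨z, h.mem_E, rfl⟩
  · have : n = u.length + (n - u.length) := by omega
    rw [this, pre_wcat_add, SCIFS.Xs_append]
    exact ⟨z, h (n - u.length) (by omega), rfl⟩

theorem exists_hasAddr (a₀ : ι) : ∃ (z : M) (τ : ℕ → ι), HasAddr S z τ := by
  set τ : ℕ → ι := fun _ => a₀ with hτ
  have hdec : ∀ n : ℕ, S.Xs (pre τ (n + 2)) ⊆ S.Xs (pre τ (n + 1)) :=
    fun n => S.Xs_prefix_mono (pre_prefix τ (by omega))
  have hne : (⋂ n : ℕ, S.Xs (pre τ (n + 1))).Nonempty := by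
    apply IsCompact.nonempty_iInter_of_sequence_nonempty_isCompact_isClosed
      (fun n => S.Xs (pre τ (n + 1))) hdec
      (fun n => S.Xs_nonempty _) (S.isCompact_Xs _)
      (fun n => (S.isCompact_Xs _).isClosed)
  obtain ⟨z, hz⟩ := hne
  refine ⟨z, τ, fun n hn => ?_⟩
  have := Set.mem_iInter.1 hz (n - 1)
  have hn1 : n - 1 + 1 = n := by omega
  rwa [hn1] at this

/-- Trimming a chain of cylinders at scale ρ. -/
theorem trim {σ : ℝ} (hσ : ∀ a : ι, S.shi [a] ≤ σ) (hσ0 : 0 ≤ σ) (hσ1 : σ < 1)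
    {q : M} {τ : ℕ → ι} (hq : ∀ n, 1 ≤ n → q ∈ S.Xs (pre τ n))
    {ρ : ℝ} (hρ : 0 < ρ) {L₀ : ℕ} (hL₀ : 1 ≤ L₀)
    (hbig : ρ < Metric.diam (S.Xs (pre τ L₀))) :
    ∃ L : ℕ, L₀ < L ∧ pre τ L ∈ Zr S.Xs ρ ∧ q ∈ S.Xs (pre τ L) ∧
      pre τ L₀ <+: pre τ L := by
  classical
  have hex : ∃ n : ℕ, Metric.diam (S.Xs (pre τ n)) ≤ ρ := by
    obtain ⟨n, hn⟩ := exists_pow_lt_of_lt_one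
      (div_pos hρ S.diam_E_pos) hσ1
    refine ⟨n, le_trans (S.diam_Xs_le_pow hσ hσ0 _) ?_⟩
    rw [pre_length, ← le_div_iff₀ S.diam_E_pos]
    exact hn.le
  set L := Nat.find hex with hL
  have hLspec : Metric.diam (S.Xs (pre τ L)) ≤ ρ := Nat.find_spec hex
  have hLmin : ∀ n < L, ρ < Metric.diam (S.Xs (pre τ n)) := by
    intro n hn
    have := Nat.find_min hex hn
    linarith [not_le.1 this]
  have hL0L : L₀ < L := by
    by_contra hc
    push_neg at hc
    have := S.diam_Xs_prefix_anti (pre_prefix τ hc)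
    linarith
  refine ⟨L, hL0L, ⟨pre_ne_nil τ (by omega), hLspec, Or.inr ?_⟩, hq L (by omega),
    pre_prefix τ hL0L.le⟩
  · have hL1 : L - 1 + 1 = L := by omega
    rw [show (pre τ L).dropLast = pre τ (L - 1) by rw [← hL1]; exact pre_dropLast τ (L-1)]
    exact hLmin (L - 1) (by omega)

/-- Counting incomparable words inside `Zx`. -/
theorem encard_ge_of_incomp {N : ℕ} (f : Fin N → List ι) {x : M} {ρ : ℝ}
    (hZ : ∀ k, f k ∈ Zx S.Xs x ρ)
    (hinc : ∀ k l : Fin N, k ≠ l → Incomp (f k) (f l)) :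
    (N : ℕ∞) ≤ (Zx S.Xs x ρ).encard := by
  classical
  have hinj : Function.Injective f := by
    intro k l hkl
    by_contra hne
    exact (hinc k l hne).ne hkl
  set F : Finset (List ι) := Finset.image f Finset.univ with hF
  have hcard : F.card = N := by
    rw [hF, Finset.card_image_of_injective _ hinj, Finset.card_univ, Fintype.card_fin]
  have hsub : (F : Set (List ι)) ⊆ Zx S.Xs x ρ := by
    intro w hw
    simp only [hF, Finset.coe_image, Set.mem_image] at hw
    obtain ⟨k, _, rfl⟩ := hw
    exact hZ k
  calc (N : ℕ∞) = (F : Set (List ι)).encard := by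
        rw [Set.encard_coe_eq_coe_finsetCard, hcard]
  _ ≤ (Zx S.Xs x ρ).encard := Set.encard_mono hsub

end Moran
namespace Moran

open Metric

variable {ι M : Type*} [Fintype ι] [MetricSpace M]

theorem stage1 (S : SCIFS ι M)
    (Hbad : ∀ δ : ℝ, 0 < δ → ∀ y ∈ S.E, ∃ (a b : ι) (ti tj : List ι), a ≠ b ∧
      dist (comp S.φ (a :: ti) y) (comp S.φ (b :: tj) y) <
        δ * diam (S.Xs (a :: ti)))
    {sl : ℝ} (hsl0 : 0 < sl) (hsl : ∀ a : ι, sl ≤ S.slo [a]) (hsl1 : sl ≤ 1) (a₀ : ι)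
    (m : ℕ) {ε : ℝ} (hε : 0 < ε) (x : M) (τx : ℕ → ι) (hx : HasAddr S x τx) :
    ∃ w : List ι, w ≠ [] ∧ ∃ (g : Fin m → List ι) (A B : Fin m → ι)
      (T : Fin m → ℕ → ι) (z : Fin m → M),
      (∀ l, A l ≠ B l) ∧
      (∀ l, (g l ++ [A l]) <+: w) ∧
      (∀ l, pre (T l) ((g l).length + 1) = g l ++ [B l]) ∧
      (∀ l, HasAddr S (z l) (T l)) ∧
      (∀ l, dist (comp S.φ w x) (z l) ≤ S.D ^ m * ε * diam (S.Xs w)) ∧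
      (∀ l, sl / S.D ^ m * diam (S.Xs w) ≤ diam (S.Xs (g l ++ [B l]))) ∧
      (∀ l l' : Fin m, (l : ℕ) < (l' : ℕ) → (g l ++ [A l]) <+: g l') := by
  induction m with
  | zero =>
    exact ⟨[a₀], by simp, Fin.elim0, Fin.elim0, Fin.elim0, Fin.elim0, Fin.elim0,
      fun l => l.elim0, fun l => l.elim0, fun l => l.elim0, fun l => l.elim0,
      fun l => l.elim0, fun l => l.elim0, fun l l' _ => l.elim0⟩
  | succ m IH =>
    obtain ⟨w, hwne, g, A, B, T, z, h1, h2, h3, h4, h5, h6, h7⟩ := IH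
    have hD : 0 < S.D := S.D_pos
    have hD1 : (1:ℝ) ≤ S.D := S.one_le_D
    have hDm : (1:ℝ) ≤ S.D ^ m := one_le_pow₀ hD1
    have hDm1 : (1:ℝ) ≤ S.D ^ (m+1) := one_le_pow₀ hD1
    have hDmpos : (0:ℝ) < S.D ^ m := by positivity
    set y := comp S.φ w x with hy
    have hyE : y ∈ S.E := S.comp_mem_E hx.mem_E w
    have hdw : 0 < diam (S.Xs w) := S.diam_Xs_pos w
    have hdE : 0 < diam S.E := S.diam_E_pos
    set dE := diam S.E with hdEdef
    set dw := diam (S.Xs w) with hdwdef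
    set δ := ε * dw / (S.D * dE) with hδ
    have hδ0 : 0 < δ := by positivity
    obtain ⟨a, b, ti, tj, hab, hdist⟩ := Hbad δ hδ0 y hyE
    set i := a :: ti with hidef
    set j := b :: tj with hjdef
    set w' := i ++ w with hw'
    have hine : i ≠ [] := by simp [hidef]
    have hw'ne : w' ≠ [] := by simp [hw', hidef]
    have hiw : comp S.φ w' x = comp S.φ i y := by
      rw [hw', comp_append]; rfl
    have hslo_i : 0 < S.slo i := S.slo_pos i hine
    have hshi_i : S.shi i ≤ S.D * S.slo i := S.shi_le_D_slo i hine
    have hk1 : S.slo i * dw ≤ diam (S.Xs w') := by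
      have := S.diam_Xs_append_ge i w
      rwa [S.slo'_ne i hine, ← hw'] at this
    have hk1' : diam (S.Xs w') ≤ S.shi i * dw := by
      have := S.diam_Xs_append_le i w
      rwa [S.shi'_ne i hine, ← hw'] at this
    have hk2 : diam (S.Xs i) ≤ S.D * S.slo i * dE := by
      have h := S.diam_le_shi' i
      rw [S.shi'_ne i hine] at h
      calc diam (S.Xs i) ≤ S.shi i * dE := h
      _ ≤ S.D * S.slo i * dE := by nlinarith
    have hdw' : 0 < diam (S.Xs w') := S.diam_Xs_pos w'
    have hdw'le : diam (S.Xs w') ≤ dE := S.diam_Xs_le_diam_E w'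
    -- the new-branch distance estimate
    have hnew : dist (comp S.φ w' x) (comp S.φ j y) ≤
        S.D ^ (m+1) * ε * diam (S.Xs w') := by
      rw [hiw]
      have e0 : δ * (S.D * S.slo i * dE) = ε * (S.slo i * dw) := by
        rw [hδ]; field_simp
      have e1 : δ * diam (S.Xs i) ≤ ε * (S.slo i * dw) := by
        rw [← e0]
        exact mul_le_mul_of_nonneg_left hk2 hδ0.le
      have e2 : ε * (S.slo i * dw) ≤ ε * diam (S.Xs w') :=
        mul_le_mul_of_nonneg_left hk1 hε.le
      have e3 : ε * diam (S.Xs w') ≤ S.D ^ (m+1) * ε * diam (S.Xs w') := by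
        nlinarith [mul_nonneg hε.le hdw'.le]
      linarith [hdist]
    -- the old-branch distance estimate
    have hold : ∀ l : Fin m, dist (comp S.φ w' x) (comp S.φ i (z l)) ≤
        S.D ^ (m+1) * ε * diam (S.Xs w') := by
      intro l
      rw [hiw]
      have e1 : dist (comp S.φ i y) (comp S.φ i (z l)) ≤ S.shi i * dist y (z l) := by
        have := S.dist_comp_le i y (z l)
        rwa [S.shi'_ne i hine] at this
      have e2 : dist y (z l) ≤ S.D ^ m * ε * dw := h5 l
      have e3 : S.shi i * (S.D ^ m * ε * dw) ≤ S.D * S.slo i * (S.D ^ m * ε * dw) :=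
        mul_le_mul_of_nonneg_right hshi_i (by positivity)
      have e4 : S.D * S.slo i * (S.D ^ m * ε * dw) = S.D ^ (m+1) * ε * (S.slo i * dw) := by
        rw [pow_succ]; ring
      have e5 : S.D ^ (m+1) * ε * (S.slo i * dw) ≤ S.D ^ (m+1) * ε * diam (S.Xs w') := by
        apply mul_le_mul_of_nonneg_left hk1 (by positivity)
      have e6 : S.shi i * dist y (z l) ≤ S.shi i * (S.D ^ m * ε * dw) := by
        apply mul_le_mul_of_nonneg_left e2 (le_trans (S.slo_pos i hine).le (S.slo_le_shi i hine))
      linarith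
    refine ⟨w', hw'ne,
      Fin.cons [] (fun l => i ++ g l),
      Fin.cons a A, Fin.cons b B,
      Fin.cons (wcat j (wcat w τx)) (fun l => wcat i (T l)),
      Fin.cons (comp S.φ j y) (fun l => comp S.φ i (z l)),
      ?_, ?_, ?_, ?_, ?_, ?_, ?_⟩
    · intro l
      refine Fin.cases ?_ ?_ l
      · simpa using hab
      · intro k; simpa using h1 k
    · intro l
      refine Fin.cases ?_ ?_ l
      · simp only [Fin.cons_zero, List.nil_append]
        exact ⟨ti ++ w, by rw [hw', hidef]; simp⟩
      · intro k
        simp only [Fin.cons_succ]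
        rw [List.append_assoc, hw']
        exact prefix_append_prefix (h2 k)
    · intro l
      refine Fin.cases ?_ ?_ l
      · simp only [Fin.cons_zero, List.nil_append, List.length_nil]
        rw [pre_wcat_of_le _ (by rw [hjdef]; simp), hjdef]
        simp
      · intro k
        simp only [Fin.cons_succ]
        rw [List.length_append, List.append_assoc,
          show i.length + (g k).length + 1 = i.length + ((g k).length + 1) by omega,
          pre_wcat_add, h3 k]
    · intro l
      refine Fin.cases ?_ ?_ l
      · simp only [Fin.cons_zero]
        exact (hx.comp w).comp j
      · intro k
        simp only [Fin.cons_succ]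
        exact (h4 k).comp i
    · intro l
      refine Fin.cases ?_ ?_ l
      · simpa using hnew
      · intro k; simpa using hold k
    · intro l
      refine Fin.cases ?_ ?_ l
      · simp only [Fin.cons_zero, Fin.cons_zero, List.nil_append]
        have hb1 : sl * dE ≤ diam (S.Xs [b]) := by
          have := S.slo'_diam_le [b]
          rw [S.slo'_ne [b] (by simp)] at this
          nlinarith [hsl b]
        have : sl / S.D ^ (m+1) * diam (S.Xs w') ≤ sl * dE := by
          rw [div_mul_eq_mul_div, div_le_iff₀ (by positivity)]
          have t1 : sl * diam (S.Xs w') ≤ sl * dE :=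
            mul_le_mul_of_nonneg_left hdw'le hsl0.le
          nlinarith [mul_pos hsl0 hdE]
        linarith
      · intro k
        simp only [Fin.cons_succ]
        rw [List.append_assoc]
        have e1 : S.slo i * diam (S.Xs (g k ++ [B k])) ≤
            diam (S.Xs (i ++ (g k ++ [B k]))) := by
          have := S.diam_Xs_append_ge i (g k ++ [B k])
          rwa [S.slo'_ne i hine] at this
        have e2 : sl / S.D ^ m * dw ≤ diam (S.Xs (g k ++ [B k])) := h6 k
        have e3 : diam (S.Xs w') ≤ S.D * S.slo i * dw := by nlinarith
        have e4 : sl / S.D ^ (m+1) * diam (S.Xs w') ≤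
            sl / S.D ^ (m+1) * (S.D * S.slo i * dw) := by
          exact mul_le_mul_of_nonneg_left e3 (div_nonneg hsl0.le (by positivity))
        have e5 : sl / S.D ^ (m+1) * (S.D * S.slo i * dw) =
            S.slo i * (sl / S.D ^ m * dw) := by
          rw [pow_succ]
          field_simp
        have e6 : S.slo i * (sl / S.D ^ m * dw) ≤
            S.slo i * diam (S.Xs (g k ++ [B k])) :=
          mul_le_mul_of_nonneg_left e2 hslo_i.le
        linarith
    · intro l l'
      refine Fin.cases ?_ ?_ l
      · refine Fin.cases ?_ ?_ l'
        · intro h; simp at h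
        · intro k' _
          simp only [Fin.cons_zero, Fin.cons_succ, List.nil_append]
          exact ⟨ti ++ g k', by rw [hidef]; simp⟩
      · intro k
        refine Fin.cases ?_ ?_ l'
        · intro h
          rw [Fin.val_succ, Fin.val_zero] at h; omega
        · intro k' hkk'
          simp only [Fin.cons_succ]
          rw [List.append_assoc]
          exact prefix_append_prefix (h7 k k' (by
            rw [Fin.val_succ, Fin.val_succ] at hkk'; omega))

end Moran
set_option maxHeartbeats 2000000 in
theorem stmt13' {ι M : Type*} [Fintype ι] [MetricSpace M] [CompleteSpace M]
    (hcard : 2 ≤ Fintype.card ι) (hM : Moran.DoublingSpace M)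
    (S : Moran.SCIFS ι M) (hFCP : Moran.FCP S.Xs) :
    ∃ δ : ℝ, 0 < δ ∧ ∃ x ∈ S.E, ∀ i j : List ι, i ≠ [] → j ≠ [] →
      Moran.Incomp i j →
        Disjoint
          (Metric.ball (Moran.comp S.φ i x) (δ * Metric.diam (S.Xs i)))
          (Metric.ball (Moran.comp S.φ j x) (δ * Metric.diam (S.Xs j))) := by
  classical
  open Moran Metric in
  obtain ⟨K, hK⟩ := hFCP
  haveI hι : Nonempty ι := Fintype.card_pos_iff.mp (by omega)
  have a₀ : ι := Classical.arbitrary ι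
  by_contra hcon
  push_neg at hcon
  have hdE : 0 < diam S.E := S.diamE_pos
  have hD1 : (1:ℝ) ≤ S.D := S.one_le_D
  have hD : (0:ℝ) < S.D := S.D_pos
  -- Step 0: a pair of incomparable words with close images, at every point and scale
  have Hdist : ∀ δ : ℝ, 0 < δ → ∀ x ∈ S.E, ∃ p q : List ι, Incomp p q ∧
      dist (comp S.φ p x) (comp S.φ q x) <
        δ * (diam (S.Xs p) + diam (S.Xs q)) := by
    intro δ hδ x hx
    obtain ⟨p, q, hp, hq, hpq, hnd⟩ := hcon δ hδ x hx
    obtain ⟨c, hc1, hc2⟩ := Set.not_disjoint_iff.1 hnd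
    refine ⟨p, q, hpq, ?_⟩
    rw [Metric.mem_ball] at hc1 hc2
    have ht := dist_triangle (comp S.φ p x) c (comp S.φ q x)
    rw [dist_comm (comp S.φ p x) c] at ht
    have hcomm : dist (comp S.φ q x) c = dist c (comp S.φ q x) := dist_comm _ _
    rw [mul_add]
    linarith
  -- Step 1: normalized form with distinct first letters
  have Hbad : ∀ δ : ℝ, 0 < δ → ∀ y ∈ S.E, ∃ (a b : ι) (ti tj : List ι), a ≠ b ∧
      dist (comp S.φ (a :: ti) y) (comp S.φ (b :: tj) y) <
        δ * diam (S.Xs (a :: ti)) := by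
    intro δ hδ y hy
    have hδ2 : 0 < δ / (2 * S.D) := by positivity
    obtain ⟨p, q, hpq, hdist⟩ := Hdist (δ / (2 * S.D)) hδ2 y hy
    obtain ⟨k, a, b, ti, tj, hab, hp, hq⟩ := incomp_decomp hpq
    subst hp; subst hq
    have hsk : 0 < S.slo' k := S.slo'_pos k
    have hstrip : S.slo' k * dist (comp S.φ (a :: ti) y) (comp S.φ (b :: tj) y) ≤
        dist (comp S.φ (k ++ a :: ti) y) (comp S.φ (k ++ b :: tj) y) := by
      rw [comp_append, comp_append]
      exact S.dist_comp_ge k _ _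
    have h2a : diam (S.Xs (k ++ a :: ti)) ≤ S.shi' k * diam (S.Xs (a :: ti)) :=
      S.diam_Xs_append_le _ _
    have h2b : diam (S.Xs (k ++ b :: tj)) ≤ S.shi' k * diam (S.Xs (b :: tj)) :=
      S.diam_Xs_append_le _ _
    have h4 : S.shi' k ≤ S.D * S.slo' k := S.shi'_le_D_slo' k
    set dA := diam (S.Xs (a :: ti)) with hdA
    set dB := diam (S.Xs (b :: tj)) with hdB
    have hdA0 : 0 < dA := S.diam_Xs_pos _
    have hdB0 : 0 < dB := S.diam_Xs_pos _
    have key : dist (comp S.φ (a :: ti) y) (comp S.φ (b :: tj) y) <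
        δ / 2 * (dA + dB) := by
      have c1 : S.slo' k * dist (comp S.φ (a :: ti) y) (comp S.φ (b :: tj) y) <
          δ / (2 * S.D) * (S.shi' k * dA + S.shi' k * dB) := by
        apply lt_of_le_of_lt hstrip
        apply lt_of_lt_of_le hdist
        apply mul_le_mul_of_nonneg_left _ hδ2.le
        exact add_le_add h2a h2b
      have c2 : δ / (2 * S.D) * (S.shi' k * dA + S.shi' k * dB) ≤
          S.slo' k * (δ / 2 * (dA + dB)) := by
        have e1 : S.shi' k * dA + S.shi' k * dB ≤
            S.D * S.slo' k * (dA + dB) := by nlinarith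
        have e2 : δ / (2 * S.D) * (S.D * S.slo' k * (dA + dB)) =
            S.slo' k * (δ / 2 * (dA + dB)) := by field_simp
        calc δ / (2 * S.D) * (S.shi' k * dA + S.shi' k * dB)
            ≤ δ / (2 * S.D) * (S.D * S.slo' k * (dA + dB)) :=
              mul_le_mul_of_nonneg_left e1 hδ2.le
        _ = S.slo' k * (δ / 2 * (dA + dB)) := e2
      exact lt_of_mul_lt_mul_left (lt_of_lt_of_le c1 c2) hsk.le
    rcases le_total dB dA with hBA | hAB
    · refine ⟨a, b, ti, tj, hab, ?_⟩
      rw [← hdA]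
      nlinarith [mul_le_mul_of_nonneg_left hBA hδ.le]
    · refine ⟨b, a, tj, ti, hab.symm, ?_⟩
      rw [dist_comm, ← hdB]
      nlinarith [mul_le_mul_of_nonneg_left hAB hδ.le]
  -- constants
  set m := K + 1 with hm
  have hDm : (1:ℝ) ≤ S.D ^ m := one_le_pow₀ hD1
  have hDmpos : (0:ℝ) < S.D ^ m := by positivity
  have huniv : (Finset.univ : Finset ι).Nonempty := Finset.univ_nonempty
  set σ : ℝ := Finset.univ.sup' huniv (fun a : ι => S.shi [a]) with hσdef
  have hσa : ∀ a : ι, S.shi [a] ≤ σ := fun a => by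
    rw [hσdef]; exact Finset.le_sup' (fun a : ι => S.shi [a]) (Finset.mem_univ a)
  have hσlt1 : σ < 1 := by
    rw [hσdef]
    exact (Finset.sup'_lt_iff huniv).2 (fun a _ => S.shi_lt_one [a] (by simp))
  have hσ0 : (0:ℝ) ≤ σ :=
    le_trans (le_trans (S.slo_pos [a₀] (by simp)).le (S.slo_le_shi [a₀] (by simp)))
      (hσa a₀)
  set sl : ℝ := Finset.univ.inf' huniv (fun a : ι => S.slo [a]) with hsldef
  have hsl0 : (0:ℝ) < sl := by
    rw [hsldef]
    exact (Finset.lt_inf'_iff huniv).2 (fun a _ => S.slo_pos [a] (by simp))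
  have hsl : ∀ a : ι, sl ≤ S.slo [a] := fun a => by
    rw [hsldef]; exact Finset.inf'_le (fun a : ι => S.slo [a]) (Finset.mem_univ a)
  have hsl1 : sl ≤ 1 :=
    le_of_lt (lt_of_le_of_lt (le_trans (hsl a₀) (S.slo_le_shi [a₀] (by simp)))
      (S.shi_lt_one [a₀] (by simp)))
  set ε0 : ℝ := sl / (8 * S.D ^ (m + 2)) with hε0def
  have hε00 : 0 < ε0 := by positivity
  set cc : ℝ := sl / S.D ^ m with hccdef
  have hcc0 : 0 < cc := by positivity
  have hcc1 : cc ≤ 1 := by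
    rw [hccdef, div_le_one hDmpos]; exact le_trans hsl1 hDm
  set ε : ℝ := ε0 / S.D ^ m with hεdef
  have hε : 0 < ε := by positivity
  have h8 : 2 * S.D * ε0 * (2 * S.D) < cc := by
    have e : 2 * S.D * ε0 * (2 * S.D) = sl / (2 * S.D ^ m) := by
      rw [hε0def, show S.D ^ (m + 2) = S.D ^ m * S.D * S.D by rw [pow_succ, pow_succ]]
      field_simp
      ring
    rw [e, hccdef]
    exact div_lt_div_of_pos_left hsl0 hDmpos (by nlinarith)
  have hoff : 2 * S.D * ε0 < cc / (2 * S.D) := (lt_div_iff₀ (by positivity)).2 h8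
  -- Step 2: build the base cluster
  obtain ⟨x₀, τ₀, hx₀⟩ := exists_hasAddr (S := S) a₀
  obtain ⟨w, hwne, g, A, B, T, z, h1, h2, h3, h4, h5, h6, h7⟩ :=
    stage1 S Hbad hsl0 hsl hsl1 a₀ m hε x₀ τ₀ hx₀
  set r := diam (S.Xs w) with hrdef
  have hr0 : 0 < r := S.diam_Xs_pos w
  set y₀ := comp S.φ w x₀ with hy₀def
  set τc := wcat w τ₀ with hτcdef
  have hy₀ : HasAddr S y₀ τc := hx₀.comp w
  have h5' : ∀ l, dist y₀ (z l) ≤ ε0 * r := by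
    intro l
    have e : S.D ^ m * ε * r = ε0 * r := by
      rw [hεdef]; field_simp
    have h := h5 l
    rw [e] at h
    exact h
  have h6' : ∀ l, cc * r ≤ diam (S.Xs (g l ++ [B l])) := by
    intro l
    have h := h6 l
    rwa [← hccdef] at h
  -- the block V
  have hwlen : 1 ≤ w.length := by
    rcases w with _ | ⟨c, w'⟩
    · exact absurd rfl hwne
    · simp
  obtain ⟨tV, htV⟩ : ∃ t : ℕ, diam (S.Xs (pre τc (w.length + t))) ≤ ε0 * r := by
    obtain ⟨n, hn⟩ := exists_pow_lt_of_lt_one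
      (show (0:ℝ) < ε0 * r / diam S.E by positivity) hσlt1
    refine ⟨n, ?_⟩
    have hb := S.diam_Xs_le_pow hσa hσ0 (pre τc (w.length + n))
    rw [pre_length] at hb
    have hb2 : σ ^ (w.length + n) ≤ σ ^ n :=
      pow_le_pow_of_le_one hσ0 hσlt1.le (by omega)
    have : σ ^ n * diam S.E < ε0 * r := by
      rw [← lt_div_iff₀ hdE]; exact hn
    nlinarith [mul_le_mul_of_nonneg_right hb2 hdE.le]
  set NB := w.length + tV with hNBdef
  set V : List ι := pre τc NB with hVdef
  have hNB1 : 1 ≤ NB := by omega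
  have hVne : V ≠ [] := pre_ne_nil τc hNB1
  have hVlen : 0 < V.length := List.length_pos_iff.2 hVne
  have hwV : w <+: V := by
    have e : pre τc w.length = w := by
      rw [hτcdef, pre_wcat_of_le τ₀ le_rfl, List.take_length]
    rw [hVdef, ← e]
    exact pre_prefix τc (by omega)
  have hdV : diam (S.Xs V) ≤ ε0 * r := htV
  have hy₀V : y₀ ∈ S.Xs V := hy₀ NB hNB1
  -- powers of the block
  set W : ℕ → List ι := fun n => (List.replicate n V).flatten with hWdef
  have hW0 : W 0 = [] := rfl
  have hWsucc : ∀ n, W (n + 1) = W n ++ V := by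
    intro n
    rw [hWdef]
    simp [List.replicate_succ']
  have hWsucc' : ∀ n, W (n + 1) = V ++ W n := by
    intro n
    rw [hWdef]
    simp [List.replicate_succ]
  have hWlen : ∀ n, (W n).length = n * V.length := by
    intro n
    induction n with
    | zero => simp [hW0]
    | succ n ih => rw [hWsucc, List.length_append, ih]; ring
  -- the point y*
  obtain ⟨ystar, hystar⟩ : (⋂ n : ℕ, S.Xs (W (n + 1))).Nonempty := by
    apply IsCompact.nonempty_iInter_of_sequence_nonempty_isCompact_isClosed
      (fun n => S.Xs (W (n + 1)))
      (fun n => S.Xs_prefix_mono ⟨V, (hWsucc (n+1)).symm⟩)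
      (fun n => S.Xs_nonempty _) (S.isCompact_Xs _)
      (fun n => (S.isCompact_Xs _).isClosed)
  have hystarW : ∀ n, 1 ≤ n → ystar ∈ S.Xs (W n) := by
    intro n hn
    have := Set.mem_iInter.1 hystar (n - 1)
    rwa [show n - 1 + 1 = n by omega] at this
  -- the periodic address of y*
  set τs : ℕ → ι := fun k => V.get ⟨k % V.length, Nat.mod_lt _ hVlen⟩ with hτsdef
  have hτseval : ∀ k, τs k = V.get ⟨k % V.length, Nat.mod_lt _ hVlen⟩ :=
    fun k => rfl
  have hτs : wcat V τs = τs := by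
    funext k
    by_cases hk : k < V.length
    · simp only [wcat, dif_pos hk]
      rw [hτseval]
      congr 1
      exact (Fin.ext (by simpa using (Nat.mod_eq_of_lt hk).symm))
    · simp only [wcat, dif_neg hk]
      rw [hτseval, hτseval]
      congr 1
      refine Fin.ext ?_
      show (k - V.length) % V.length = k % V.length
      conv_rhs => rw [show k = V.length + (k - V.length) by omega]
      rw [Nat.add_mod_left]
  have hWpre : ∀ q : ℕ, pre τs (q * V.length) = W q := by
    intro q
    induction q with
    | zero => simp [hW0, pre]
    | succ q ih =>
      have e : (q + 1) * V.length = V.length + q * V.length := by ring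
      rw [e, ← hτs, pre_wcat_add, ih, ← hWsucc' q]
  have hystar_addr : HasAddr S ystar τs := by
    intro n hn
    have hle : n ≤ n * V.length := Nat.le_mul_of_pos_right n hVlen
    have hpfx : pre τs n <+: W n := by
      rw [← hWpre n]; exact pre_prefix τs hle
    exact S.Xs_prefix_mono hpfx (hystarW n hn)
  -- the scales
  set ρ : ℕ → ℝ := fun n => cc / (2 * S.D) * (S.slo' (W n) * r) with hρdef
  have hρpos : ∀ n, 0 < ρ n := by
    intro n
    have := S.slo'_pos (W n)
    rw [hρdef]
    positivity
  -- Main claim: at every stage there are m+1 incomparable words in Z(y*, ρ n)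
  have claim : ∀ n : ℕ, ((m : ℕ∞) + 1) ≤ (Zx S.Xs ystar (ρ n)).encard := by
    intro n
    set Λ := S.slo' (W n) with hΛdef
    have hΛ : 0 < Λ := S.slo'_pos (W n)
    have hΛD : S.shi' (W n) ≤ S.D * Λ := S.shi'_le_D_slo' (W n)
    have hshiWn : 0 < S.shi' (W n) := S.shi'_pos (W n)
    -- distance estimates
    have hcen : dist (comp S.φ (W n) y₀) ystar ≤ S.shi' (W n) * (ε0 * r) := by
      have hmem1 : comp S.φ (W n) y₀ ∈ S.Xs (W (n + 1)) := by
        rw [hWsucc, SCIFS.Xs_append]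
        exact ⟨y₀, hy₀V, rfl⟩
      have hmem2 : ystar ∈ S.Xs (W (n + 1)) := hystarW (n + 1) (by omega)
      have hd : diam (S.Xs (W (n + 1))) ≤ S.shi' (W n) * (ε0 * r) := by
        rw [hWsucc]
        calc diam (S.Xs (W n ++ V)) ≤ S.shi' (W n) * diam (S.Xs V) :=
            S.diam_Xs_append_le _ _
        _ ≤ S.shi' (W n) * (ε0 * r) :=
            mul_le_mul_of_nonneg_left hdV hshiWn.le
      exact le_trans (Metric.dist_le_diam_of_mem (S.bounded_Xs _) hmem1 hmem2) hd
    have hqz : ∀ l : Fin m, dist (comp S.φ (W n) (z l)) ystar < ρ n := by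
      intro l
      have d1 : dist (comp S.φ (W n) (z l)) (comp S.φ (W n) y₀) ≤
          S.shi' (W n) * (ε0 * r) := by
        calc dist (comp S.φ (W n) (z l)) (comp S.φ (W n) y₀) ≤
            S.shi' (W n) * dist (z l) y₀ := S.dist_comp_le _ _ _
        _ ≤ S.shi' (W n) * (ε0 * r) := by
            apply mul_le_mul_of_nonneg_left _ hshiWn.le
            rw [dist_comm]; exact h5' l
      have d2 := dist_triangle (comp S.φ (W n) (z l)) (comp S.φ (W n) y₀) ystar
      have d3 : 2 * (S.shi' (W n) * (ε0 * r)) ≤ 2 * ((S.D * Λ) * (ε0 * r)) := by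
        apply mul_le_mul_of_nonneg_left _ (by norm_num)
        apply mul_le_mul_of_nonneg_right hΛD (by positivity)
      have d4 : 2 * ((S.D * Λ) * (ε0 * r)) < ρ n := by
        rw [hρdef]
        have e : 2 * ((S.D * Λ) * (ε0 * r)) = (2 * S.D * ε0) * (Λ * r) := by ring
        rw [e]
        exact mul_lt_mul_of_pos_right hoff (by positivity)
      linarith
    -- center word
    have hcenpre : pre τs ((W n).length + w.length) = W n ++ w := by
      have hWw : W n ++ w <+: pre τs ((n + 1) * V.length) := by
        rw [hWpre, hWsucc]
        exact prefix_append_prefix hwV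
      have := prefix_pre hWw
      rwa [List.length_append] at this
    have hbigc : ρ n < diam (S.Xs (pre τs ((W n).length + w.length))) := by
      rw [hcenpre]
      have hgeq : Λ * r ≤ diam (S.Xs (W n ++ w)) := S.diam_Xs_append_ge _ _
      have : cc / (2 * S.D) * (Λ * r) < Λ * r := by
        have hlt : cc / (2 * S.D) < 1 := by
          rw [div_lt_one (by positivity)]
          nlinarith
        nlinarith [mul_pos hΛ hr0]
      rw [hρdef]
      linarith
    obtain ⟨Lc, hLcgt, hLcZr, hLcmem, hLcpre⟩ :=
      trim (S := S) hσa hσ0 hσlt1 hystar_addr (hρpos n)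
        (by omega : 1 ≤ (W n).length + w.length) hbigc
    set vc := pre τs Lc with hvcdef
    -- branch words
    have hbr : ∀ l : Fin m, ∃ v : List ι, v ∈ Zr S.Xs (ρ n) ∧
        comp S.φ (W n) (z l) ∈ S.Xs v ∧ ((W n ++ g l) ++ [B l]) <+: v := by
      intro l
      have haddr : HasAddr S (comp S.φ (W n) (z l)) (wcat (W n) (T l)) :=
        (h4 l).comp (W n)
      have hprel : pre (wcat (W n) (T l)) ((W n).length + ((g l).length + 1)) =
          W n ++ (g l ++ [B l]) := by
        rw [pre_wcat_add, h3 l]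
      have hbigl : ρ n < diam (S.Xs (pre (wcat (W n) (T l))
          ((W n).length + ((g l).length + 1)))) := by
        rw [hprel]
        have e1 : Λ * diam (S.Xs (g l ++ [B l])) ≤
            diam (S.Xs (W n ++ (g l ++ [B l]))) := S.diam_Xs_append_ge _ _
        have e2 : Λ * (cc * r) ≤ Λ * diam (S.Xs (g l ++ [B l])) :=
          mul_le_mul_of_nonneg_left (h6' l) hΛ.le
        have e3 : cc / (2 * S.D) * (Λ * r) < Λ * (cc * r) := by
          have : cc / (2 * S.D) < cc := div_lt_self hcc0 (by nlinarith)
          nlinarith [mul_pos hΛ hr0]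
        rw [hρdef]
        linarith
      obtain ⟨L, hLgt, hLZr, hLmem, hLpre⟩ :=
        trim (S := S) hσa hσ0 hσlt1 haddr (hρpos n)
          (by omega : 1 ≤ (W n).length + ((g l).length + 1)) hbigl
      refine ⟨pre (wcat (W n) (T l)) L, hLZr, hLmem, ?_⟩
      rw [← List.append_assoc] at hprel
      rw [← hprel]
      exact hLpre
    choose v hv1 hv2 hv3 using hbr
    -- the m+1 words
    have hfZ : ∀ k : Fin (m + 1),
        (Fin.cons vc v : Fin (m + 1) → List ι) k ∈ Zx S.Xs ystar (ρ n) := by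
      intro k
      rcases Fin.eq_zero_or_eq_succ k with rfl | ⟨l, rfl⟩
      · rw [Fin.cons_zero]
        exact ⟨hLcZr, ⟨ystar, hLcmem, Metric.mem_ball_self (hρpos n)⟩⟩
      · rw [Fin.cons_succ]
        refine ⟨hv1 l, ⟨comp S.φ (W n) (z l), hv2 l, ?_⟩⟩
        rw [Metric.mem_ball]
        exact hqz l
    -- incomparability
    have hvcpre : ∀ l : Fin m, ((W n ++ g l) ++ [A l]) <+: vc := by
      intro l
      have e1 : W n ++ (g l ++ [A l]) <+: W n ++ w := prefix_append_prefix (h2 l)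
      rw [← List.append_assoc] at e1
      exact e1.trans (by rw [← hcenpre]; exact hLcpre)
    have hfinc : ∀ k k' : Fin (m + 1), k ≠ k' →
        Incomp ((Fin.cons vc v : Fin (m + 1) → List ι) k)
          ((Fin.cons vc v : Fin (m + 1) → List ι) k') := by
      have hmain : ∀ l : Fin m, Incomp vc (v l) := fun l =>
        incomp_of_prefix (hvcpre l) (hv3 l) (h1 l)
      have hbb : ∀ l l' : Fin m, (l : ℕ) < (l' : ℕ) → Incomp (v l) (v l') := by
        intro l l' hll'
        have e1 : ((W n ++ g l) ++ [A l]) <+: v l' := by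
          have p1 : g l ++ [A l] <+: g l' := h7 l l' hll'
          have p2 : g l' <+: g l' ++ [B l'] := ⟨[B l'], rfl⟩
          have p3 : W n ++ (g l ++ [A l]) <+: W n ++ (g l' ++ [B l']) :=
            prefix_append_prefix (p1.trans p2)
          rw [← List.append_assoc] at p3
          have hvv := hv3 l'
          rw [List.append_assoc] at hvv
          exact p3.trans hvv
        exact incomp_of_prefix (hv3 l) e1 (h1 l).symm
      intro k k' hkk'
      rcases Fin.eq_zero_or_eq_succ k with rfl | ⟨l, rfl⟩ <;>
        rcases Fin.eq_zero_or_eq_succ k' with rfl | ⟨l', rfl⟩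
      · exact absurd rfl hkk'
      · rw [Fin.cons_zero, Fin.cons_succ]
        exact hmain l'
      · rw [Fin.cons_zero, Fin.cons_succ]
        exact (hmain l).symm
      · rw [Fin.cons_succ, Fin.cons_succ]
        rcases lt_trichotomy (l : ℕ) (l' : ℕ) with h | h | h
        · exact hbb l l' h
        · exact absurd (congrArg Fin.succ (Fin.ext h)) hkk'
        · exact (hbb l' l h).symm
    have := encard_ge_of_incomp (S := S) (Fin.cons vc v) hfZ hfinc
    calc ((m : ℕ∞) + 1) = ((m + 1 : ℕ) : ℕ∞) := by push_cast; ring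
    _ ≤ (Zx S.Xs ystar (ρ n)).encard := this
  -- Step 3: contradiction with FCP
  have hls := hK ystar hystar_addr.mem_limitSet
  have hev : ∀ᶠ ρ' in nhdsWithin (0:ℝ) (Set.Ioi 0),
      (Zx S.Xs ystar ρ').encard < (K : ℕ∞) + 1 := by
    exact Filter.eventually_lt_of_limsup_lt
      (lt_of_le_of_lt hls
        ((ENat.lt_add_one_iff (show (K : ℕ∞) ≠ ⊤ by simp)).2 le_rfl))
      (by isBoundedDefault)
  obtain ⟨u, hu, husub⟩ := mem_nhdsGT_iff_exists_Ioo_subset.1 hev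
  rw [Set.mem_Ioi] at hu
  -- find n with ρ n < u
  obtain ⟨n1, hn1⟩ := exists_pow_lt_of_lt_one
    (show (0:ℝ) < u / r by positivity) hσlt1
  set n := n1 + 1 with hndef
  have hWn_ne : W n ≠ [] := by
    intro h
    have h2 := hWlen n
    rw [h] at h2
    simp only [List.length_nil] at h2
    have hpos : 0 < n * V.length := Nat.mul_pos (by omega) hVlen
    exact hpos.ne' h2.symm
  have hΛσ : S.slo' (W n) ≤ σ ^ n := by
    have e1 : S.slo' (W n) * diam S.E ≤ diam (S.Xs (W n)) := S.slo'_diam_le (W n)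
    have e2 : diam (S.Xs (W n)) ≤ σ ^ (W n).length * diam S.E :=
      S.diam_Xs_le_pow hσa hσ0 (W n)
    have e3 : σ ^ (W n).length ≤ σ ^ n := by
      apply pow_le_pow_of_le_one hσ0 hσlt1.le
      rw [hWlen]
      exact Nat.le_mul_of_pos_right n hVlen
    have := le_trans e1 (le_trans e2 (mul_le_mul_of_nonneg_right e3 hdE.le))
    exact le_of_mul_le_mul_right this hdE
  have hρlt : ρ n < u := by
    have e1 : ρ n ≤ S.slo' (W n) * r := by
      rw [hρdef]
      have hle1 : cc / (2 * S.D) ≤ 1 := by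
        rw [div_le_one (by positivity)]
        nlinarith
      nlinarith [mul_pos (S.slo'_pos (W n)) hr0]
    have e2 : S.slo' (W n) * r ≤ σ ^ n * r :=
      mul_le_mul_of_nonneg_right hΛσ hr0.le
    have e3 : σ ^ n * r ≤ σ ^ n1 * r := by
      apply mul_le_mul_of_nonneg_right _ hr0.le
      exact pow_le_pow_of_le_one hσ0 hσlt1.le (by omega)
    have e4 : σ ^ n1 * r < u := by
      rw [← lt_div_iff₀ hr0]
      exact hn1
    linarith
  have hfin := husub ⟨hρpos n, hρlt⟩
  have hclaim := claim n
  have : ((m : ℕ∞) + 1) < (K : ℕ∞) + 1 := lt_of_le_of_lt hclaim hfin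
  have hcast : ((m : ℕ) + 1 : ℕ) < ((K : ℕ) + 1 : ℕ) := by
    have e1 : ((m : ℕ∞) + 1) = (((m + 1 : ℕ)) : ℕ∞) := by push_cast; ring
    have e2 : ((K : ℕ∞) + 1) = (((K + 1 : ℕ)) : ℕ∞) := by push_cast; ring
    rw [e1, e2] at this
    exact_mod_cast this
  rw [hm] at hcast
  omega

/-- For a semiconformal IFS on a complete doubling metric space whose
construction `{φ_i(E)}` has the finite clustering property, there exist `δ > 0` and
`x ∈ E` with `B(φ_i(x), δ diam(φ_i(E))) ∩ B(φ_j(x), δ diam(φ_j(E))) = ∅` whenever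
`i ⊥ j`. -/
theorem stmt13 {ι M : Type*} [Fintype ι] [MetricSpace M] [CompleteSpace M]
    (hcard : 2 ≤ Fintype.card ι) (hM : Moran.DoublingSpace M)
    (S : Moran.SCIFS ι M) (hFCP : Moran.FCP S.Xs) :
    ∃ δ : ℝ, 0 < δ ∧ ∃ x ∈ S.E, ∀ i j : List ι, i ≠ [] → j ≠ [] →
      Moran.Incomp i j →
        Disjoint
          (Metric.ball (Moran.comp S.φ i x) (δ * Metric.diam (S.Xs i)))
          (Metric.ball (Moran.comp S.φ j x) (δ * Metric.diam (S.Xs j))) := by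
  exact stmt13' hcard hM S hFCP
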